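/- arXiv:2502.20917 — 2 statements merged into one kernel-verified Lean document; each statement's English description precedes it below -/
import Mathlib

section
/- For every critical value c and every a > c, F(a; θ, c) → 1 as θ → −∞ and F(a; θ, c) → 0 as θ → +∞. -/
open Filter Set

/-- The standard normal CDF `Φ(t) = (2π)^{−1/2} ∫_{−∞}^t exp(−s²/2) ds`. -/
noncomputable def Phi (t : ℝ) : ℝ :=
  (Real.sqrt (2 * Real.pi))⁻¹ * ∫ s in Set.Iic t, Real.exp (-(s ^ 2) / 2)

/-- The truncated-normal distribution function
    `F(a; θ, c) := (Φ(a − θ) − Φ(c − θ)) / (1 − Φ(c − θ))`. -/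
noncomputable def F (a θ c : ℝ) : ℝ :=
  (Phi (a - θ) - Phi (c - θ)) / (1 - Phi (c - θ))

open MeasureTheory
lemma gauss_int : Integrable (fun s : ℝ => Real.exp (-(s ^ 2) / 2)) := by
  have h := integrable_exp_neg_mul_sq (b := 1/2) (by norm_num)
  refine h.congr (Eventually.of_forall fun x => ?_)
  ring_nf

lemma gauss_total : (∫ s : ℝ, Real.exp (-(s ^ 2) / 2)) = Real.sqrt (2 * Real.pi) := by
  have hfun : (fun s : ℝ => Real.exp (-(s ^ 2) / 2))
      = fun x : ℝ => Real.exp (-(1/2) * x ^ 2) := by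
    funext x; ring_nf
  rw [hfun, integral_gaussian, show Real.pi / (1/2 : ℝ) = 2 * Real.pi by ring]

noncomputable def Ttail (t : ℝ) : ℝ := ∫ s in Set.Ioi t, Real.exp (-(s ^ 2) / 2)

lemma sqrt2pi_pos : 0 < Real.sqrt (2 * Real.pi) :=
  Real.sqrt_pos.2 (by positivity)

lemma phi_eq (t : ℝ) :
    Phi t = 1 - (Real.sqrt (2 * Real.pi))⁻¹ * Ttail t := by
  have hsplit : (∫ s in Set.Iic t, Real.exp (-(s ^ 2) / 2)) + Ttail t
      = Real.sqrt (2 * Real.pi) := by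
    have h := setIntegral_union (Set.Iic_disjoint_Ioi (le_refl t)) measurableSet_Ioi
      gauss_int.integrableOn gauss_int.integrableOn
        (f := fun s : ℝ => Real.exp (-(s ^ 2) / 2)) (μ := volume)
    rw [Set.Iic_union_Ioi, setIntegral_univ, gauss_total] at h
    rw [Ttail, ← h]
  have h : (∫ s in Set.Iic t, Real.exp (-(s ^ 2) / 2))
      = Real.sqrt (2 * Real.pi) - Ttail t := by linarith
  rw [Phi, h]
  field_simp

lemma F_eq (a θ c : ℝ) :
    F a θ c = (Ttail (c - θ) - Ttail (a - θ)) / Ttail (c - θ) := by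
  have hk : (Real.sqrt (2 * Real.pi))⁻¹ ≠ 0 := by
    exact inv_ne_zero (ne_of_gt sqrt2pi_pos)
  rw [F, phi_eq, phi_eq]
  rw [show (1 - (Real.sqrt (2 * Real.pi))⁻¹ * Ttail (a - θ)
        - (1 - (Real.sqrt (2 * Real.pi))⁻¹ * Ttail (c - θ)))
      = (Real.sqrt (2 * Real.pi))⁻¹ * (Ttail (c - θ) - Ttail (a - θ)) by ring,
    show (1 - (1 - (Real.sqrt (2 * Real.pi))⁻¹ * Ttail (c - θ)))
      = (Real.sqrt (2 * Real.pi))⁻¹ * Ttail (c - θ) by ring]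
  exact mul_div_mul_left _ _ hk

lemma T_pos (t : ℝ) : 0 < Ttail t := by
  rw [Ttail]
  refine (setIntegral_pos_iff_support_of_nonneg_ae ?_ gauss_int.integrableOn).2 ?_
  · exact Eventually.of_forall fun x => (Real.exp_pos _).le
  · have : Function.support (fun s : ℝ => Real.exp (-(s ^ 2) / 2)) = Set.univ := by
      ext x; simp [Function.mem_support, (Real.exp_pos _).ne']
    rw [this, Set.univ_inter]
    simp

lemma T_tendsto_atBot :
    Tendsto Ttail atBot (nhds (Real.sqrt (2 * Real.pi))) := by
  rw [← gauss_total]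
  exact (aecover_Ioi (tendsto_id (α := ℝ))).integral_tendsto_of_countably_generated
    gauss_int

lemma T_upper {t : ℝ} (ht : 0 < t) :
    Ttail t ≤ Real.exp (-(t ^ 2) / 2) / t := by
  have hint' : IntegrableOn (fun s : ℝ => s * Real.exp (-(s ^ 2) / 2)) (Set.Ioi t) := by
    have h := integrable_mul_exp_neg_mul_sq (b := 1/2) (by norm_num)
    refine (h.congr (Eventually.of_forall fun x => ?_)).integrableOn
    ring_nf
  have key : (∫ s in Set.Ioi t, s * Real.exp (-(s ^ 2) / 2)) = Real.exp (-(t ^ 2) / 2) := by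
    have hd : ∀ x ∈ Set.Ici t,
        HasDerivAt (fun s : ℝ => -Real.exp (-(s ^ 2) / 2))
          (x * Real.exp (-(x ^ 2) / 2)) x := by
      intro x _
      have h1 : HasDerivAt (fun s : ℝ => -(s ^ 2) / 2) (-x) x := by
        have := ((hasDerivAt_pow 2 x).neg.div_const 2)
        simpa using this.congr_deriv (by push_cast; ring)
      have h2 := (h1.exp).neg
      refine h2.congr_deriv ?_
      ring
    have hlim : Tendsto (fun s : ℝ => -Real.exp (-(s ^ 2) / 2)) atTop (nhds 0) := by
      rw [show (0 : ℝ) = -0 by ring]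
      refine Tendsto.neg ?_
      refine Real.tendsto_exp_atBot.comp ?_
      have h1 : Tendsto (fun s : ℝ => s ^ 2) atTop atTop :=
        tendsto_pow_atTop two_ne_zero
      have h2 : Tendsto (fun s : ℝ => -(s ^ 2)) atTop atBot :=
        tendsto_neg_atTop_atBot.comp h1
      exact h2.atBot_div_const (by norm_num)
    have := integral_Ioi_of_hasDerivAt_of_tendsto' hd hint' hlim
    rw [this]; ring
  have hmono : Ttail t ≤ ∫ s in Set.Ioi t, (1 / t) * (s * Real.exp (-(s ^ 2) / 2)) := by
    rw [Ttail]
    refine setIntegral_mono_on gauss_int.integrableOn (hint'.const_mul _)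
      measurableSet_Ioi fun s hs => ?_
    have hs' : t < s := hs
    have h1 : (1 : ℝ) ≤ s / t := (one_le_div ht).2 hs'.le
    calc Real.exp (-(s ^ 2) / 2) = 1 * Real.exp (-(s ^ 2) / 2) := by ring
      _ ≤ (s / t) * Real.exp (-(s ^ 2) / 2) :=
          mul_le_mul_of_nonneg_right h1 (Real.exp_pos _).le
      _ = (1 / t) * (s * Real.exp (-(s ^ 2) / 2)) := by ring
  calc Ttail t ≤ ∫ s in Set.Ioi t, (1 / t) * (s * Real.exp (-(s ^ 2) / 2)) := hmono
    _ = (1 / t) * ∫ s in Set.Ioi t, s * Real.exp (-(s ^ 2) / 2) := by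
        rw [integral_const_mul]
    _ = Real.exp (-(t ^ 2) / 2) / t := by rw [key]; ring

lemma T_lower {u v : ℝ} (h0 : 0 ≤ u) (huv : u < v) :
    (v - u) * Real.exp (-(v ^ 2) / 2) ≤ Ttail u := by
  have step1 : (∫ s in Set.Ioc u v, Real.exp (-(s ^ 2) / 2)) ≤ Ttail u := by
    rw [Ttail]
    refine setIntegral_mono_set gauss_int.integrableOn
      (Eventually.of_forall fun x => (Real.exp_pos _).le)
      (HasSubset.Subset.eventuallyLE Set.Ioc_subset_Ioi_self)
  have step2 : (v - u) * Real.exp (-(v ^ 2) / 2)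
      ≤ ∫ s in Set.Ioc u v, Real.exp (-(s ^ 2) / 2) := by
    have hconst : (∫ _ in Set.Ioc u v, Real.exp (-(v ^ 2) / 2))
        = (v - u) * Real.exp (-(v ^ 2) / 2) := by
      rw [setIntegral_const, measureReal_def, Real.volume_Ioc, ENNReal.toReal_ofReal (by linarith)]
      simp [smul_eq_mul]
    rw [← hconst]
    refine setIntegral_mono_on (integrableOn_const measure_Ioc_lt_top.ne)
      gauss_int.integrableOn measurableSet_Ioc fun s hs => ?_
    have h1 : s ^ 2 ≤ v ^ 2 := by nlinarith [hs.1, hs.2]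
    exact Real.exp_le_exp.2 (by linarith)
  linarith

lemma ratio_tendsto (c a : ℝ) (ha : c < a) :
    Tendsto (fun θ : ℝ => Ttail (a - θ) / Ttail (c - θ)) atBot (nhds 0) := by
  have hub : Tendsto (fun θ : ℝ => 1 / ((a - c) * (a - θ))) atBot (nhds 0) := by
    have h1 : Tendsto (fun θ : ℝ => a - θ) atBot atTop := by
      exact (tendsto_atTop_add_const_left atBot a tendsto_neg_atBot_atTop).congr fun θ => (sub_eq_add_neg a θ).symm
    have h2 : Tendsto (fun θ : ℝ => (a - c) * (a - θ)) atBot atTop :=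
      h1.const_mul_atTop (by linarith)
    refine (tendsto_inv_atTop_zero.comp h2).congr fun θ => ?_
    simp [Function.comp, one_div]
  refine tendsto_of_tendsto_of_tendsto_of_le_of_le' tendsto_const_nhds hub ?_ ?_
  · exact Eventually.of_forall fun θ => le_of_lt (div_pos (T_pos _) (T_pos _))
  · filter_upwards [eventually_le_atBot c] with θ hθ
    have h0 : (0 : ℝ) ≤ c - θ := by linarith
    have hav : c - θ < a - θ := by linarith
    have hpos : (0 : ℝ) < a - θ := by linarith
    have hU := T_upper hpos
    have hL := T_lower h0 hav
    have hL' : (a - c) * Real.exp (-((a - θ) ^ 2) / 2) ≤ Ttail (c - θ) := by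
      have : a - θ - (c - θ) = a - c := by ring
      rwa [this] at hL
    calc Ttail (a - θ) / Ttail (c - θ)
        ≤ (Real.exp (-((a - θ) ^ 2) / 2) / (a - θ)) /
            ((a - c) * Real.exp (-((a - θ) ^ 2) / 2)) := by
          refine div_le_div₀ (by positivity) hU (mul_pos (by linarith) (Real.exp_pos _)) hL'
      _ = 1 / ((a - c) * (a - θ)) := by
          rw [div_div]
          rw [show (a - θ) * ((a - c) * Real.exp (-((a - θ) ^ 2) / 2))
            = ((a - c) * (a - θ)) * Real.exp (-((a - θ) ^ 2) / 2) by ring]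
          rw [div_mul_eq_div_div_swap, div_self (Real.exp_pos _).ne']
      
/-- For every critical value `c` and every `a > c`, `F(a; θ, c) → 1` as `θ → −∞`
and `F(a; θ, c) → 0` as `θ → +∞`. -/
theorem stmt_2 (c a : ℝ) (ha : c < a) :
    Tendsto (fun θ : ℝ => F a θ c) atBot (nhds 1) ∧
    Tendsto (fun θ : ℝ => F a θ c) atTop (nhds 0) := by
  constructor
  · have h := ratio_tendsto c a ha
    have : Tendsto (fun θ : ℝ => 1 - Ttail (a - θ) / Ttail (c - θ)) atBot (nhds 1) := by
      simpa using tendsto_const_nhds.sub h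
    refine this.congr fun θ => ?_
    rw [F_eq, sub_div, div_self (T_pos (c - θ)).ne']
  · have hcb : Tendsto (fun θ : ℝ => c - θ) atTop atBot := by
      exact (tendsto_atBot_add_const_left atTop c tendsto_neg_atTop_atBot).congr fun θ => (sub_eq_add_neg c θ).symm
    have hab : Tendsto (fun θ : ℝ => a - θ) atTop atBot := by
      exact (tendsto_atBot_add_const_left atTop a tendsto_neg_atTop_atBot).congr fun θ => (sub_eq_add_neg a θ).symm
    have hc := T_tendsto_atBot.comp hcb
    have haT := T_tendsto_atBot.comp hab
    have hnum : Tendsto (fun θ : ℝ => Ttail (c - θ) - Ttail (a - θ)) atTop (nhds 0) := by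
      simpa using hc.sub haT
    have hdiv := hnum.div hc (ne_of_gt sqrt2pi_pos)
    rw [zero_div] at hdiv
    refine hdiv.congr fun θ => ?_
    simp only [Pi.div_apply, Function.comp_apply]
    rw [F_eq]
end

section
/- (Theorem 1, marginal significance.) Fix a critical value c and p ∈ (0, 1). Then the implicitly defined quantile diverges to −∞ as the observed statistic approaches the critical value from above: for every M ∈ ℝ there exists δ > 0 such that for every x with c < x < c + δ and every θ ∈ ℝ satisfying F(x; θ, c) = p, one has θ < −M. -/
open Filter Set

private lemma g_integrable : MeasureTheory.Integrable (fun s : ℝ => Real.exp (-(s ^ 2) / 2)) := by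
  have h := integrable_exp_neg_mul_sq (b := 1/2) (by norm_num)
  refine h.congr ?_
  filter_upwards with s
  ring_nf

private lemma sqrt_two_pi_pos : (0 : ℝ) < Real.sqrt (2 * Real.pi) :=
  Real.sqrt_pos.mpr (by positivity)

private lemma Phi_sub (a b : ℝ) (hab : a ≤ b) :
    Phi b - Phi a = (Real.sqrt (2 * Real.pi))⁻¹ *
      ∫ s in Set.Ioc a b, Real.exp (-(s ^ 2) / 2) := by
  unfold Phi
  rw [← mul_sub, intervalIntegral.integral_Iic_sub_Iic g_integrable.integrableOn
    g_integrable.integrableOn, intervalIntegral.integral_of_le hab]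

private lemma Phi_mono {a b : ℝ} (hab : a ≤ b) : Phi a ≤ Phi b := by
  have h := Phi_sub a b hab
  have hpos : 0 ≤ ∫ s in Set.Ioc a b, Real.exp (-(s ^ 2) / 2) :=
    MeasureTheory.setIntegral_nonneg measurableSet_Ioc (fun s _ => (Real.exp_pos _).le)
  nlinarith [sqrt_two_pi_pos, inv_pos.mpr sqrt_two_pi_pos]

private lemma Phi_sub_le (a b : ℝ) (hab : a ≤ b) :
    Phi b - Phi a ≤ (Real.sqrt (2 * Real.pi))⁻¹ * (b - a) := by
  rw [Phi_sub a b hab]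
  have key : (∫ s in Set.Ioc a b, Real.exp (-(s ^ 2) / 2)) ≤ b - a := by
    calc (∫ s in Set.Ioc a b, Real.exp (-(s ^ 2) / 2))
        ≤ ∫ _s in Set.Ioc a b, (1 : ℝ) := by
          apply MeasureTheory.setIntegral_mono_on g_integrable.integrableOn
            (MeasureTheory.integrableOn_const (by simp))
            measurableSet_Ioc
          intro s _
          rw [Real.exp_le_one_iff]
          nlinarith [sq_nonneg s]
      _ = b - a := by
          rw [MeasureTheory.setIntegral_const, smul_eq_mul, mul_one, Real.volume_real_Ioc_of_le hab]
  exact mul_le_mul_of_nonneg_left key (inv_pos.mpr sqrt_two_pi_pos).le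

private lemma one_sub_Phi_pos (t : ℝ) : 0 < 1 - Phi t := by
  have hWhole : (∫ s : ℝ, Real.exp (-(s ^ 2) / 2)) = Real.sqrt (2 * Real.pi) := by
    have h := integral_gaussian (1/2)
    have he : (fun x : ℝ => Real.exp (-(1/2) * x ^ 2)) = fun s => Real.exp (-(s ^ 2) / 2) := by
      funext s; ring_nf
    rw [he] at h
    rw [h]
    congr 1
    rw [div_div_eq_mul_div, div_one, mul_comm]
  have hsplit : (∫ s in Set.Iic t, Real.exp (-(s ^ 2) / 2)) +
      (∫ s in Set.Ioi t, Real.exp (-(s ^ 2) / 2)) = Real.sqrt (2 * Real.pi) := by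
    rw [intervalIntegral.integral_Iic_add_Ioi g_integrable.integrableOn g_integrable.integrableOn,
      hWhole]
  have hpos : 0 < ∫ s in Set.Ioi t, Real.exp (-(s ^ 2) / 2) := by
    rw [MeasureTheory.setIntegral_pos_iff_support_of_nonneg_ae
      (Filter.Eventually.of_forall (fun s => (Real.exp_pos _).le)) g_integrable.integrableOn]
    have : Function.support (fun s : ℝ => Real.exp (-(s ^ 2) / 2)) = Set.univ := by
      ext s; simp [Function.mem_support, (Real.exp_pos _).ne']
    rw [this, Set.univ_inter]
    simp [Real.volume_Ioi]
  have hone : (Real.sqrt (2 * Real.pi))⁻¹ * Real.sqrt (2 * Real.pi) = 1 :=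
    inv_mul_cancel₀ sqrt_two_pi_pos.ne'
  have heq : 1 - Phi t = (Real.sqrt (2 * Real.pi))⁻¹ *
      (Real.sqrt (2 * Real.pi) - ∫ s in Set.Iic t, Real.exp (-(s ^ 2) / 2)) := by
    unfold Phi
    rw [mul_sub, hone]
  have heq2 : Real.sqrt (2 * Real.pi) - (∫ s in Set.Iic t, Real.exp (-(s ^ 2) / 2)) =
      ∫ s in Set.Ioi t, Real.exp (-(s ^ 2) / 2) := by linarith
  rw [heq, heq2]
  exact mul_pos (inv_pos.mpr sqrt_two_pi_pos) hpos

/-- (Theorem 1, marginal significance.) Fix `c` and `p ∈ (0,1)`. For every `M`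
there is `δ > 0` such that for every `x` with `c < x < c + δ` and every `θ` with
`F(x; θ, c) = p`, one has `θ < −M`. -/
theorem stmt_3 (c p : ℝ) (hp : p ∈ Set.Ioo (0 : ℝ) 1) :
    ∀ M : ℝ, ∃ δ > (0 : ℝ), ∀ x : ℝ, c < x → x < c + δ →
      ∀ θ : ℝ, F x θ c = p → θ < -M := by
  intro M
  obtain ⟨hp0, hp1⟩ := hp
  set K : ℝ := 1 - Phi (c + M) with hK
  have hKpos : 0 < K := one_sub_Phi_pos (c + M)
  refine ⟨p * Real.sqrt (2 * Real.pi) * K, by positivity, ?_⟩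
  intro x hx hxδ θ hF
  by_contra hle
  push_neg at hle
  -- hle : -M ≤ θ, i.e. c - θ ≤ c + M
  have h1 : c - θ ≤ c + M := by linarith
  have hden : K ≤ 1 - Phi (c - θ) := by
    have := Phi_mono h1
    linarith
  have hdenpos : 0 < 1 - Phi (c - θ) := lt_of_lt_of_le hKpos hden
  have hnum : Phi (x - θ) - Phi (c - θ) ≤ (Real.sqrt (2 * Real.pi))⁻¹ * (x - c) := by
    have := Phi_sub_le (c - θ) (x - θ) (by linarith)
    calc Phi (x - θ) - Phi (c - θ) ≤ (Real.sqrt (2 * Real.pi))⁻¹ * ((x - θ) - (c - θ)) := this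
      _ = (Real.sqrt (2 * Real.pi))⁻¹ * (x - c) := by ring_nf
  have hnum0 : 0 ≤ Phi (x - θ) - Phi (c - θ) := by
    have := Phi_mono (a := c - θ) (b := x - θ) (by linarith)
    linarith
  have hFle : F x θ c ≤ ((Real.sqrt (2 * Real.pi))⁻¹ * (x - c)) / K := by
    unfold F
    calc (Phi (x - θ) - Phi (c - θ)) / (1 - Phi (c - θ))
        ≤ (Phi (x - θ) - Phi (c - θ)) / K :=
          div_le_div_of_nonneg_left hnum0 hKpos hden
      _ ≤ ((Real.sqrt (2 * Real.pi))⁻¹ * (x - c)) / K :=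
          (div_le_div_iff_of_pos_right hKpos).mpr hnum
  have hlt : ((Real.sqrt (2 * Real.pi))⁻¹ * (x - c)) / K < p := by
    have hxc : x - c < p * Real.sqrt (2 * Real.pi) * K := by linarith
    rw [div_lt_iff₀ hKpos]
    have hS := sqrt_two_pi_pos
    calc (Real.sqrt (2 * Real.pi))⁻¹ * (x - c)
        < (Real.sqrt (2 * Real.pi))⁻¹ * (p * Real.sqrt (2 * Real.pi) * K) := by
          exact mul_lt_mul_of_pos_left hxc (inv_pos.mpr hS)
      _ = p * K := by field_simp
  rw [hF] at hFle
  linarith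
end
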